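/- arXiv:2011.08524 — 3 statements merged into one kernel-verified Lean document; each statement's English description precedes it below -/
import Mathlib

section
/- Let r = (r_j)_{j≥1} be a sequence of positive real numbers. The set 𝔻_X(r) is an open subset of X if and only if inf_j r_j > 0. -/
open Filter Topology

noncomputable section

/-- A normalized Schauder basis of a complex Banach space `X`: vectors `e j` of norm one,
continuous linear coordinate functionals `coord j` biorthogonal to them, with uniformly
bounded norms, such that the partial sums of the basis expansion of every `x` converge to `x`. -/
structure NormalizedSchauderBasis (X : Type*) [NormedAddCommGroup X] [NormedSpace ℂ X] where
  e : ℕ → X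
  coord : ℕ → X →L[ℂ] ℂ
  norm_e : ∀ j, ‖e j‖ = 1
  coord_e : ∀ i j, coord i (e j) = if i = j then 1 else 0
  coord_bdd : ∃ C : ℝ, ∀ j, ‖coord j‖ ≤ C
  expand : ∀ x : X,
    Tendsto (fun n => ∑ j ∈ Finset.range n, coord j x • e j) atTop (nhds x)

/-- The polydisk-type domain `𝔻_X(r) = {x ∈ X : |e_j^*(x)| < r j for all j}`. -/
def polydisk {X : Type*} [NormedAddCommGroup X] [NormedSpace ℂ X]
    (B : NormalizedSchauderBasis X) (r : ℕ → ℝ) : Set X :=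
  {x | ∀ j, ‖B.coord j x‖ < r j}

/-- for a sequence `r` of positive reals, `𝔻_X(r)` is open in `X`
iff `inf_j r_j > 0`. -/
theorem stmt0 {X : Type*} [NormedAddCommGroup X] [NormedSpace ℂ X] [CompleteSpace X]
    (B : NormalizedSchauderBasis X) (r : ℕ → ℝ) (hr : ∀ j, 0 < r j) :
    IsOpen (polydisk B r) ↔ 0 < ⨅ j, r j := by
  constructor
  · intro hopen
    have h0 : (0 : X) ∈ polydisk B r := by
      intro j; simpa using hr j
    obtain ⟨ε, hε, hball⟩ := Metric.isOpen_iff.1 hopen 0 h0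
    have hle : ∀ j, ε / 2 ≤ r j := by
      intro j
      have hx : ((ε / 2 : ℝ) : ℂ) • B.e j ∈ Metric.ball (0 : X) ε := by
        simp only [Metric.mem_ball, dist_zero_right, norm_smul, B.norm_e, mul_one,
          Complex.norm_real, Real.norm_eq_abs]
        rw [abs_of_nonneg (by linarith)]
        linarith
      have := hball hx j
      simp only [polydisk, Set.mem_setOf_eq, map_smul, smul_eq_mul, B.coord_e,
        if_true, ite_true, mul_one, Complex.norm_real, Real.norm_eq_abs] at this
      rw [abs_of_nonneg (by linarith)] at this
      linarith
    exact lt_of_lt_of_le (by linarith) (le_ciInf hle)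
  · intro hm
    set m := ⨅ j, r j with hmdef
    have hmr : ∀ j, m ≤ r j := fun j =>
      ciInf_le ⟨0, fun y ⟨j, hj⟩ => hj ▸ (hr j).le⟩ j
    obtain ⟨C₀, hC₀⟩ := B.coord_bdd
    set C := max C₀ 1 with hCdef
    have hC : 0 < C := lt_of_lt_of_le one_pos (le_max_right _ _)
    have hCb : ∀ j, ‖B.coord j‖ ≤ C := fun j => (hC₀ j).trans (le_max_left _ _)
    rw [Metric.isOpen_iff]
    intro x hx
    -- coordinates of x tend to 0
    have htend : Tendsto (fun j => ‖B.coord j x‖) atTop (nhds 0) := by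
      have h1 := B.expand x
      have h2 : Tendsto (fun n => ∑ j ∈ Finset.range (n + 1), B.coord j x • B.e j)
          atTop (nhds x) := h1.comp (tendsto_add_atTop_nat 1)
      have h3 : Tendsto (fun j => B.coord j x • B.e j) atTop (nhds 0) := by
        have := h2.sub h1
        simp only [sub_self] at this
        refine this.congr fun n => ?_
        rw [Finset.sum_range_succ]; abel
      have h4 := h3.norm
      simp only [norm_zero] at h4
      refine h4.congr fun j => ?_
      rw [norm_smul, B.norm_e, mul_one]
    obtain ⟨N, hN⟩ := (htend.eventually_lt_const (by linarith : (0:ℝ) < m / 2)).exists_forall_of_atTop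
    -- gap function
    set g : ℕ → ℝ := fun j => r j - ‖B.coord j x‖ with hg
    have hgpos : ∀ j, 0 < g j := fun j => sub_pos.2 (hx j)
    have hgN : ∀ j, N ≤ j → m / 2 ≤ g j := by
      intro j hj
      have := hN j hj
      have := hmr j
      simp only [hg]; linarith
    set s := insert (m / 2) ((Finset.range N).image g) with hs
    have hsne : s.Nonempty := ⟨m / 2, Finset.mem_insert_self _ _⟩
    set δ := s.min' hsne with hδdef
    have hδmem := s.min'_mem hsne
    have hδpos : 0 < δ := by
      rcases Finset.mem_insert.1 hδmem with h | h
      · rw [hδdef, h]; linarith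
      · obtain ⟨j, _, hj⟩ := Finset.mem_image.1 h
        rw [hδdef, ← hj]; exact hgpos j
    have hδg : ∀ j, δ ≤ g j := by
      intro j
      rcases lt_or_ge j N with hj | hj
      · exact s.min'_le _ (Finset.mem_insert_of_mem
          (Finset.mem_image.2 ⟨j, Finset.mem_range.2 hj, rfl⟩))
      · exact (s.min'_le _ (Finset.mem_insert_self _ _)).trans (hgN j hj)
    refine ⟨δ / C, div_pos hδpos hC, ?_⟩
    intro y hy
    rw [Metric.mem_ball, dist_eq_norm] at hy
    intro j
    have h1 : ‖B.coord j y‖ ≤ ‖B.coord j x‖ + ‖B.coord j (y - x)‖ := by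
      have hy' : y = x + (y - x) := by abel
      calc ‖B.coord j y‖ = ‖B.coord j x + B.coord j (y - x)‖ := by
            rw [← map_add, ← hy']
      _ ≤ _ := norm_add_le _ _
    have h2 : ‖B.coord j (y - x)‖ ≤ C * ‖y - x‖ :=
      le_trans ((B.coord j).le_opNorm _) (by gcongr; exact hCb j)
    have h3 : C * ‖y - x‖ < C * (δ / C) := by gcongr
    rw [mul_div_cancel₀ _ hC.ne'] at h3
    have := hδg j
    simp only [hg] at this
    linarith
end
end

section
/- Let (r_n)_{n≥1} ⊂ (0,1) satisfy ∑_{n=1}^∞ (1 − r_n) < ∞, and set δ = ∏_{n=1}^∞ r_n > 0. Then for every x = (x_n) ∈ B_{c₀} the infinite product f(x) = ∏_{n=1}^∞ (r_n − x_n)/(1 − r_n x_n) converges; the resulting function f : B_{c₀} → ℂ is holomorphic, satisfies |f(x)| ≤ 1 for all x ∈ B_{c₀}, and f(0) = δ. -/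
open Filter Topology Metric
open scoped ZeroAtInfty

noncomputable section

open Complex
namespace Stmt12

def bl (t : ℝ) (z : ℂ) : ℂ := ((t:ℂ) - z) / (1 - t * z)

lemma den_norm {t : ℝ} (ht0 : 0 ≤ t) (ht1 : t ≤ 1) (z : ℂ) :
    1 - ‖z‖ ≤ ‖1 - (t:ℂ) * z‖ := by
  have h1 : ‖(1:ℂ)‖ - ‖(t:ℂ)*z‖ ≤ ‖1 - (t:ℂ)*z‖ := norm_sub_norm_le _ _
  have h2 : ‖(t:ℂ)*z‖ ≤ ‖z‖ := by
    rw [norm_mul, Complex.norm_real]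
    calc ‖t‖ * ‖z‖ ≤ 1 * ‖z‖ := by
          apply mul_le_mul_of_nonneg_right _ (norm_nonneg z)
          rwa [Real.norm_of_nonneg ht0]
      _ = ‖z‖ := one_mul _
  simp only [norm_one] at h1
  linarith

lemma den_ne {t : ℝ} (ht0 : 0 ≤ t) (ht1 : t ≤ 1) {z : ℂ} (hz : ‖z‖ < 1) :
    (1 : ℂ) - t * z ≠ 0 := by
  intro h
  have := den_norm ht0 ht1 z
  rw [h, norm_zero] at this
  linarith

lemma bl_norm_le {t : ℝ} (ht : t ∈ Set.Ioo (0:ℝ) 1) {z : ℂ} (hz : ‖z‖ < 1) :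
    ‖bl t z‖ ≤ 1 := by
  obtain ⟨ht0, ht1⟩ := ht
  have hden := den_ne ht0.le ht1.le hz
  rw [bl, norm_div, div_le_one (norm_pos_iff.2 hden)]
  have sqn : ∀ w : ℂ, ‖w‖^2 = w.re^2 + w.im^2 := fun w => by
    rw [Complex.sq_norm, Complex.normSq_apply]; ring
  have key : ‖(t:ℂ) - z‖^2 ≤ ‖(1:ℂ) - t*z‖^2 := by
    have e1 := sqn ((t:ℂ) - z)
    have e2 := sqn ((1:ℂ) - (t:ℂ)*z)
    have hz2 : z.re^2 + z.im^2 < 1 := by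
      have h := sqn z
      nlinarith [norm_nonneg z]
    simp only [Complex.sub_re, Complex.sub_im, Complex.one_re, Complex.one_im,
      Complex.mul_re, Complex.mul_im, Complex.ofReal_re, Complex.ofReal_im] at e1 e2
    rw [e1, e2]
    nlinarith [mul_nonneg (by nlinarith : (0:ℝ) ≤ 1 - t^2)
      (by linarith : (0:ℝ) ≤ 1 - (z.re^2+z.im^2))]
  nlinarith [norm_nonneg ((t:ℂ) - z), norm_nonneg ((1:ℂ) - t*z)]


lemma bl_sub_one {t : ℝ} {z : ℂ} (hden : (1:ℂ) - t*z ≠ 0) :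
    bl t z - 1 = -((1-(t:ℂ))*(1+z))/(1 - t*z) := by
  rw [bl]
  field_simp
  ring

lemma bl_sub_one_norm {t : ℝ} (ht : t ∈ Set.Ioo (0:ℝ) 1) {ρ : ℝ} (hρ : ρ < 1)
    {z : ℂ} (hz : ‖z‖ ≤ ρ) : ‖bl t z - 1‖ ≤ 2*(1-t)/(1-ρ) := by
  obtain ⟨ht0, ht1⟩ := ht
  have hz1 : ‖z‖ < 1 := lt_of_le_of_lt hz hρ
  have hden := den_ne ht0.le ht1.le hz1
  rw [bl_sub_one hden, norm_div, norm_neg, norm_mul]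
  have h1 : ‖(1:ℂ) - (t:ℂ)‖ = 1 - t := by
    rw [show (1:ℂ) - (t:ℂ) = ((1 - t : ℝ) : ℂ) by push_cast; ring, Complex.norm_real,
      Real.norm_of_nonneg (by linarith)]
  have h2 : ‖(1:ℂ) + z‖ ≤ 2 := by
    calc ‖(1:ℂ) + z‖ ≤ ‖(1:ℂ)‖ + ‖z‖ := norm_add_le _ _
      _ ≤ 2 := by rw [norm_one]; linarith
  have h3 : 1 - ρ ≤ ‖(1:ℂ) - t*z‖ := le_trans (by linarith) (den_norm ht0.le ht1.le z)
  have hd : (0:ℝ) < 1 - ρ := by linarith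
  rw [h1]
  calc (1-t) * ‖(1:ℂ)+z‖ / ‖(1:ℂ) - t*z‖ ≤ (1-t) * 2 / (1-ρ) := by
        apply div_le_div₀ (by nlinarith) _ hd h3
        exact mul_le_mul_of_nonneg_left h2 (by linarith)
    _ = 2*(1-t)/(1-ρ) := by ring

lemma bl_hasDerivAt {t : ℝ} {z : ℂ} (hden : (1:ℂ) - t*z ≠ 0) :
    HasDerivAt (bl t) (((t:ℂ)^2 - 1)/(1 - t*z)^2) z := by
  have h1 : HasDerivAt (fun z : ℂ => (t:ℂ) - z) (-1) z := by
    simpa using (hasDerivAt_id z).const_sub ((t:ℂ))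
  have h2 : HasDerivAt (fun z : ℂ => (1:ℂ) - t*z) (-(t:ℂ)) z := by
    simpa using ((hasDerivAt_id z).const_mul ((t:ℂ))).const_sub (1:ℂ)
  have := h1.div h2 hden
  refine this.congr_deriv ?_
  field_simp
  ring

lemma mem_slit {w : ℂ} (h : ‖w - 1‖ ≤ 1/2) : w ∈ Complex.slitPlane := by
  rw [Complex.mem_slitPlane_iff]
  left
  have : |w.re - 1| ≤ 1/2 := by
    calc |w.re - 1| = |(w - 1).re| := by simp
      _ ≤ ‖w - 1‖ := Complex.abs_re_le_norm _
      _ ≤ 1/2 := h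
  have := abs_le.1 this
  linarith [this.1]

lemma bl_ne_zero {t : ℝ} (ht0 : 0 < t) {z : ℂ} (hz : ‖z‖ < t) (hden : (1:ℂ) - t*z ≠ 0) :
    bl t z ≠ 0 := by
  rw [bl, div_ne_zero_iff]
  refine ⟨?_, hden⟩
  intro h
  have : (t:ℂ) = z := by linear_combination h
  rw [← this] at hz
  rw [Complex.norm_real, Real.norm_of_nonneg ht0.le] at hz
  exact lt_irrefl _ hz

lemma log_bl_hasDerivAt {t : ℝ} (ht : t ∈ Set.Ioo (0:ℝ) 1) {ρ : ℝ} (hρ0 : 0 ≤ ρ) (hρ : ρ < 1)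
    (ht4 : 1 - t ≤ (1-ρ)/4) {z : ℂ} (hz : ‖z‖ ≤ ρ) :
    HasDerivAt (fun z => Complex.log (bl t z)) (((t:ℂ)^2-1)/((1 - t*z)*((t:ℂ)-z))) z := by
  obtain ⟨ht0, ht1⟩ := ht
  have hz1 : ‖z‖ < 1 := lt_of_le_of_lt hz hρ
  have hden := den_ne ht0.le ht1.le hz1
  have hhalf : ‖bl t z - 1‖ ≤ 1/2 := by
    calc ‖bl t z - 1‖ ≤ 2*(1-t)/(1-ρ) := bl_sub_one_norm ⟨ht0, ht1⟩ hρ hz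
      _ ≤ 1/2 := by rw [div_le_div_iff₀ (by linarith) (by norm_num)]; linarith
  have hslit : bl t z ∈ Complex.slitPlane := mem_slit hhalf
  have hzt : ‖z‖ < t := by linarith
  have hne : bl t z ≠ 0 := bl_ne_zero ht0 hzt hden
  have := (bl_hasDerivAt hden).clog hslit
  convert this using 1
  rw [bl]
  have hnum : (t:ℂ) - z ≠ 0 := by
    intro h
    apply hne
    rw [bl, h, zero_div]
  field_simp

lemma deriv_bound {t : ℝ} (ht : t ∈ Set.Ioo (0:ℝ) 1) {ρ : ℝ} (hρ0 : 0 ≤ ρ) (hρ : ρ < 1)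
    (ht4 : 1 - t ≤ (1-ρ)/4) {z : ℂ} (hz : ‖z‖ ≤ ρ) :
    ‖((t:ℂ)^2-1)/((1 - t*z)*((t:ℂ)-z))‖ ≤ 4*(1-t)/(1-ρ)^2 := by
  obtain ⟨ht0, ht1⟩ := ht
  have hz1 : ‖z‖ < 1 := lt_of_le_of_lt hz hρ
  have h3 : 1 - ρ ≤ ‖(1:ℂ) - t*z‖ := le_trans (by linarith) (den_norm ht0.le ht1.le z)
  have h4 : (1-ρ)/2 ≤ ‖(t:ℂ) - z‖ := by
    have : t - ‖z‖ ≤ ‖(t:ℂ) - z‖ := by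
      have := norm_sub_norm_le ((t:ℂ)) z
      rwa [Complex.norm_real, Real.norm_of_nonneg ht0.le] at this
    linarith
  have h5 : ‖(t:ℂ)^2 - 1‖ = 1 - t^2 := by
    rw [show (t:ℂ)^2 - 1 = ((t^2 - 1 : ℝ) : ℂ) by push_cast; ring, Complex.norm_real,
      Real.norm_of_nonpos (by nlinarith), neg_sub]
  have hd : (0:ℝ) < 1 - ρ := by linarith
  rw [norm_div, norm_mul, h5]
  have hden_pos : (0:ℝ) < ‖(1:ℂ) - t*z‖ * ‖(t:ℂ) - z‖ := by
    apply mul_pos <;> linarith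
  rw [div_le_div_iff₀ hden_pos (by positivity)]
  have e1 : (1-ρ) * ((1-ρ)/2) ≤ ‖(1:ℂ) - t*z‖ * ‖(t:ℂ) - z‖ :=
    mul_le_mul h3 h4 (by linarith) (norm_nonneg _)
  nlinarith [mul_le_mul_of_nonneg_left e1 (by nlinarith : (0:ℝ) ≤ 4*(1-t)),
    mul_nonneg (mul_nonneg hd.le hd.le) (by nlinarith : (0:ℝ) ≤ (1-t)*(1-t))]

lemma log_bl_norm_le {t : ℝ} (ht : t ∈ Set.Ioo (0:ℝ) 1) {ρ : ℝ} (hρ0 : 0 ≤ ρ) (hρ : ρ < 1)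
    (ht4 : 1 - t ≤ (1-ρ)/4) {z : ℂ} (hz : ‖z‖ ≤ ρ) :
    ‖Complex.log (bl t z)‖ ≤ 3*(1-t)/(1-ρ) := by
  obtain ⟨ht0, ht1⟩ := ht
  have hhalf : ‖bl t z - 1‖ ≤ 1/2 := by
    calc ‖bl t z - 1‖ ≤ 2*(1-t)/(1-ρ) := bl_sub_one_norm ⟨ht0, ht1⟩ hρ hz
      _ ≤ 1/2 := by rw [div_le_div_iff₀ (by linarith) (by norm_num)]; linarith
  have := Complex.norm_log_one_add_half_le_self (z := bl t z - 1) hhalf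
  rw [show (1:ℂ) + (bl t z - 1) = bl t z by ring] at this
  calc ‖Complex.log (bl t z)‖ ≤ 3/2 * ‖bl t z - 1‖ := this
    _ ≤ 3/2 * (2*(1-t)/(1-ρ)) := by
        apply mul_le_mul_of_nonneg_left (bl_sub_one_norm ⟨ht0, ht1⟩ hρ hz) (by norm_num)
    _ = 3*(1-t)/(1-ρ) := by ring


lemma apply_norm_le (x : C₀(ℕ, ℂ)) (n : ℕ) : ‖x n‖ ≤ ‖x‖ := by
  have h := x.toBCF.norm_coe_le_norm n
  rwa [ZeroAtInftyContinuousMap.norm_toBCF_eq_norm] at h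

def ev (n : ℕ) : C₀(ℕ, ℂ) →L[ℂ] ℂ :=
  LinearMap.mkContinuous
    { toFun := fun x => x n
      map_add' := fun x y => by simp
      map_smul' := fun c x => by simp }
    1 (fun x => by simpa using apply_norm_le x n)

@[simp] lemma ev_apply (n : ℕ) (x : C₀(ℕ, ℂ)) : ev n x = x n := rfl

lemma ev_norm_le (n : ℕ) : ‖ev n‖ ≤ 1 :=
  LinearMap.mkContinuous_norm_le _ zero_le_one _

lemma smul_ev_norm_le (c : ℂ) (m : ℕ) : ‖c • ev m‖ ≤ ‖c‖ := by
  refine le_trans (ContinuousLinearMap.opNorm_smul_le c (ev m)) ?_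
  nlinarith [ev_norm_le m, norm_nonneg c, norm_nonneg (ev m)]


section key

variable {r : ℕ → ℝ} (hr : ∀ n, r n ∈ Set.Ioo (0 : ℝ) 1)
  (hsum : Summable (fun n => 1 - r n))
  {ρ : ℝ} (hρ0 : 0 < ρ) (hρ1 : ρ < 1)
  {N : ℕ} (hN : ∀ n, N ≤ n → 1 - r n ≤ (1-ρ)/4)

include hr hsum hρ0 hρ1 hN

lemma sum_log (y : C₀(ℕ, ℂ)) (hy : ‖y‖ < ρ) :
    Summable (fun n => Complex.log (bl (r (n+N)) (y (n+N)))) := by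
  apply Summable.of_norm_bounded (g := fun n => (3/(1-ρ)) * (1 - r (n+N)))
  · exact ((summable_nat_add_iff N).2 hsum).mul_left _
  · intro n
    have h := log_bl_norm_le (hr (n+N)) hρ0.le hρ1 (hN (n+N) (Nat.le_add_left N n))
      ((apply_norm_le y (n+N)).trans hy.le)
    calc ‖Complex.log (bl (r (n+N)) (y (n+N)))‖ ≤ 3*(1 - r (n+N))/(1-ρ) := h
      _ = (3/(1-ρ)) * (1 - r (n+N)) := by ring

lemma bl_tail_ne_zero (y : C₀(ℕ, ℂ)) (hy : ‖y‖ < ρ) (n : ℕ) :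
    bl (r (n+N)) (y (n+N)) ≠ 0 := by
  obtain ⟨h0, h1⟩ := hr (n+N)
  have h4 := hN (n+N) (Nat.le_add_left N n)
  have hz : ‖y (n+N)‖ < r (n+N) := by
    have := (apply_norm_le y (n+N)).trans_lt hy
    linarith
  exact bl_ne_zero h0 hz (den_ne h0.le h1.le (by linarith [(apply_norm_le y (n+N)).trans_lt hy]))

lemma tail_hasProd (y : C₀(ℕ, ℂ)) (hy : ‖y‖ < ρ) :
    HasProd (fun n => bl (r (n+N)) (y (n+N)))
      (Complex.exp (∑' n, Complex.log (bl (r (n+N)) (y (n+N))))) := by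
  have hs := sum_log hr hsum hρ0 hρ1 hN y hy
  have h := hs.hasSum.cexp
  have he : (Complex.exp ∘ fun n => Complex.log (bl (r (n+N)) (y (n+N))))
      = fun n => bl (r (n+N)) (y (n+N)) := by
    funext n
    exact Complex.exp_log (bl_tail_ne_zero hr hsum hρ0 hρ1 hN y hy n)
  rwa [he] at h

lemma full_hasProd (y : C₀(ℕ, ℂ)) (hy : ‖y‖ < ρ) :
    HasProd (fun n => bl (r n) (y n))
      ((∏ i ∈ Finset.range N, bl (r i) (y i)) *
        Complex.exp (∑' n, Complex.log (bl (r (n+N)) (y (n+N))))) :=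
  HasProd.prod_range_mul (f := fun n => bl (r n) (y n)) (k := N)
    (tail_hasProd hr hsum hρ0 hρ1 hN y hy)

lemma T_hasFDerivAt (y : C₀(ℕ, ℂ)) (hy : y ∈ ball (0 : C₀(ℕ, ℂ)) ρ) :
    DifferentiableAt ℂ
      (fun x : C₀(ℕ, ℂ) => ∑' n, Complex.log (bl (r (n+N)) (x (n+N)))) y := by
  set f' : ℕ → C₀(ℕ, ℂ) → (C₀(ℕ, ℂ) →L[ℂ] ℂ) := fun n x =>
    ((((r (n+N) : ℂ))^2 - 1)/((1 - (r (n+N) : ℂ) * x (n+N)) * ((r (n+N) : ℂ) - x (n+N)))) •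
      ev (n+N) with hf'
  have key := hasFDerivAt_tsum_of_isPreconnected
    (u := fun n => 4*(1 - r (n+N))/(1-ρ)^2)
    (f := fun n (x : C₀(ℕ, ℂ)) => Complex.log (bl (r (n+N)) (x (n+N))))
    (f' := f')
    ((((summable_nat_add_iff N).2 hsum).mul_left (4/(1-ρ)^2)).congr
      (fun n => by ring)) isOpen_ball
    ((convex_ball (0 : C₀(ℕ, ℂ)) ρ).isPreconnected) ?_ ?_
    (mem_ball_self hρ0) ?_ hy
  · exact ⟨_, key⟩
  · intro n x hx
    rw [mem_ball_zero_iff] at hx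
    have hd := log_bl_hasDerivAt (hr (n+N)) hρ0.le hρ1 (hN (n+N) (Nat.le_add_left N n))
      ((apply_norm_le x (n+N)).trans hx.le)
    exact hd.comp_hasFDerivAt x ((ev (n+N)).hasFDerivAt)
  · intro n x hx
    rw [mem_ball_zero_iff] at hx
    have hb := deriv_bound (hr (n+N)) hρ0.le hρ1 (hN (n+N) (Nat.le_add_left N n))
      ((apply_norm_le x (n+N)).trans hx.le)
    exact le_trans (smul_ev_norm_le _ _) hb
  · exact sum_log hr hsum hρ0 hρ1 hN 0 (by simpa using hρ0)

end key

variable {r : ℕ → ℝ}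

lemma log_r_summable (hr : ∀ n, r n ∈ Set.Ioo (0 : ℝ) 1)
    (hsum : Summable (fun n => 1 - r n)) : Summable (fun n => Real.log (r n)) := by
  apply Summable.of_norm_bounded_eventually_nat (g := fun n => 2*(1 - r n)) (hsum.mul_left 2)
  have h := hsum.tendsto_atTop_zero.eventually_lt_const (show (0:ℝ) < 1/2 by norm_num)
  filter_upwards [h] with n hn
  obtain ⟨h0, h1⟩ := hr n
  have hhalf : (1:ℝ)/2 < r n := by linarith
  have hlog : -Real.log (r n) ≤ (r n)⁻¹ - 1 := by
    rw [← Real.log_inv]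
    exact Real.log_le_sub_one_of_pos (by positivity)
  have hnn : 0 ≤ -Real.log (r n) := by
    rw [neg_nonneg]
    exact Real.log_nonpos h0.le h1.le
  rw [Real.norm_eq_abs, abs_of_nonpos (Real.log_nonpos h0.le h1.le)]
  have : (r n)⁻¹ - 1 = (1 - r n)/(r n) := by field_simp
  rw [this] at hlog
  calc -Real.log (r n) ≤ (1 - r n)/(r n) := hlog
    _ ≤ 2*(1 - r n) := by
        rw [div_le_iff₀ h0]
        nlinarith

lemma r_hasProd (hr : ∀ n, r n ∈ Set.Ioo (0 : ℝ) 1)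
    (hsum : Summable (fun n => 1 - r n)) :
    HasProd r (Real.exp (∑' n, Real.log (r n))) := by
  have h := (log_r_summable hr hsum).hasSum.rexp
  have he : (Real.exp ∘ fun n => Real.log (r n)) = r := by
    funext n
    exact Real.exp_log (hr n).1
  rwa [he] at h

end Stmt12

open Stmt12 in
/-- if `(r_n) ⊂ (0,1)` with `∑ (1 − r_n) < ∞`, then `δ = ∏ r_n > 0`, the
Blaschke-type product `f(x) = ∏_n (r_n − x_n)/(1 − r_n x_n)` converges for every `x` in
the open unit ball of `c₀`, defines a holomorphic function there, is bounded by `1`, and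
`f(0) = δ`. -/
theorem stmt12 (r : ℕ → ℝ) (hr : ∀ n, r n ∈ Set.Ioo (0 : ℝ) 1)
    (hsum : Summable (fun n => 1 - r n)) :
    0 < (∏' n, r n) ∧
    (∀ x ∈ ball (0 : C₀(ℕ, ℂ)) 1,
      Multipliable (fun n => ((r n : ℂ) - x n) / (1 - (r n : ℂ) * x n))) ∧
    DifferentiableOn ℂ
      (fun x : C₀(ℕ, ℂ) => ∏' n, ((r n : ℂ) - x n) / (1 - (r n : ℂ) * x n))
      (ball 0 1) ∧
    (∀ x ∈ ball (0 : C₀(ℕ, ℂ)) 1,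
      ‖∏' n, ((r n : ℂ) - x n) / (1 - (r n : ℂ) * x n)‖ ≤ 1) ∧
    (fun x : C₀(ℕ, ℂ) => ∏' n, ((r n : ℂ) - x n) / (1 - (r n : ℂ) * x n)) 0 =
      ((∏' n, r n : ℝ) : ℂ) := by
  have hδ : HasProd r (Real.exp (∑' n, Real.log (r n))) := r_hasProd hr hsum
  -- a common device: for `x` with `‖x‖ < 1`, produce `ρ` and `N`
  have device : ∀ x : C₀(ℕ, ℂ), ‖x‖ < 1 → ∃ ρ : ℝ, ∃ N : ℕ,
      0 < ρ ∧ ρ < 1 ∧ ‖x‖ < ρ ∧ ∀ n, N ≤ n → 1 - r n ≤ (1-ρ)/4 := by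
    intro x hx
    set ρ : ℝ := (1 + ‖x‖)/2 with hρ
    have hρ0 : 0 < ρ := by
      have := norm_nonneg x
      rw [hρ]; linarith
    have hρ1 : ρ < 1 := by rw [hρ]; linarith
    have hxρ : ‖x‖ < ρ := by rw [hρ]; linarith
    have hev := hsum.tendsto_atTop_zero.eventually_lt_const
      (show (0:ℝ) < (1-ρ)/4 by linarith)
    obtain ⟨N, hN⟩ := eventually_atTop.1 hev
    exact ⟨ρ, N, hρ0, hρ1, hxρ, fun n hn => (hN n hn).le⟩
  refine ⟨?_, ?_, ?_, ?_, ?_⟩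
  · rw [hδ.tprod_eq]
    exact Real.exp_pos _
  · -- multipliability
    intro x hx
    rw [mem_ball_zero_iff] at hx
    obtain ⟨ρ, N, hρ0, hρ1, hxρ, hN⟩ := device x hx
    exact (full_hasProd hr hsum hρ0 hρ1 hN x hxρ).multipliable
  · -- differentiability
    intro x₀ hx₀
    rw [mem_ball_zero_iff] at hx₀
    obtain ⟨ρ, N, hρ0, hρ1, hxρ, hN⟩ := device x₀ hx₀
    have hx₀ρ : x₀ ∈ ball (0 : C₀(ℕ, ℂ)) ρ := mem_ball_zero_iff.2 hxρ
    -- the local model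
    set g : C₀(ℕ, ℂ) → ℂ := fun x =>
      (∏ i ∈ Finset.range N, bl (r i) (x i)) *
        Complex.exp (∑' n, Complex.log (bl (r (n+N)) (x (n+N)))) with hg
    have hgd : DifferentiableAt ℂ g x₀ := by
      apply DifferentiableAt.mul
      · have : ∀ i ∈ Finset.range N, HasFDerivAt (fun x : C₀(ℕ, ℂ) => bl (r i) (x i))
            (((((r i : ℂ))^2 - 1)/(1 - (r i : ℂ) * x₀ i)^2) • ev i) x₀ := by
          intro i _
          have hzi : ‖x₀ i‖ < 1 := lt_trans ((apply_norm_le x₀ i).trans_lt hxρ) hρ1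
          have hden := den_ne (hr i).1.le (hr i).2.le hzi
          exact (bl_hasDerivAt hden).comp_hasFDerivAt x₀ ((ev i).hasFDerivAt)
        exact (HasFDerivAt.finset_prod this).differentiableAt
      · exact (T_hasFDerivAt hr hsum hρ0 hρ1 hN x₀ hx₀ρ).cexp
    have heq : (fun x : C₀(ℕ, ℂ) => ∏' n, ((r n : ℂ) - x n) / (1 - (r n : ℂ) * x n))
        =ᶠ[𝓝 x₀] g := by
      filter_upwards [isOpen_ball.mem_nhds hx₀ρ] with y hy
      rw [mem_ball_zero_iff] at hy
      exact (full_hasProd hr hsum hρ0 hρ1 hN y hy).tprod_eq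
    exact (hgd.congr_of_eventuallyEq heq).differentiableWithinAt
  · -- bounded by 1
    intro x hx
    rw [mem_ball_zero_iff] at hx
    obtain ⟨ρ, N, hρ0, hρ1, hxρ, hN⟩ := device x hx
    have hp := (full_hasProd hr hsum hρ0 hρ1 hN x hxρ).multipliable.hasProd
    refine le_of_tendsto hp.norm (Filter.Eventually.of_forall fun s => ?_)
    exact Finset.prod_le_one (fun i _ => norm_nonneg _)
      (fun i _ => bl_norm_le (hr i) (lt_of_le_of_lt (apply_norm_le x i) hx))
  · -- value at 0
    have h0 : (fun x : C₀(ℕ, ℂ) => ∏' n, ((r n : ℂ) - x n) / (1 - (r n : ℂ) * x n)) 0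
        = ∏' n, ((r n : ℂ)) := by
      apply tprod_congr
      intro n
      simp
    rw [h0]
    have hpc : HasProd (fun n => ((r n : ℂ))) (((∏' n, r n : ℝ) : ℂ)) := by
      exact (hδ.multipliable.hasProd).map Complex.ofRealHom.toMonoidHom
        Complex.continuous_ofReal
    exact hpc.tprod_eq
end
end

section
/- For all u = (u_n), v = (v_n) in the open unit ball B_{c₀}, the pseudohyperbolic distance between the point evaluations at u and v on H^∞(B_{c₀}) satisfies: sup{ |f(v)| : f ∈ H^∞(B_{c₀}), sup_{x ∈ B_{c₀}} |f(x)| ≤ 1, f(u) = 0 } = sup_{n ≥ 1} | (u_n − v_n) / (1 − conj(u_n) v_n) |. -/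
open Filter Topology Metric
open scoped ZeroAtInfty ComplexConjugate BoundedContinuousFunction
noncomputable section

lemma key_ident (a z : ℂ) :
    Complex.normSq (1 - conj a * z) - Complex.normSq (a - z)
      = (1 - Complex.normSq a) * (1 - Complex.normSq z) := by
  simp only [Complex.normSq_apply, Complex.sub_re, Complex.sub_im, Complex.mul_re,
    Complex.mul_im, Complex.one_re, Complex.one_im, Complex.conj_re, Complex.conj_im]
  ring

lemma denom_ne {a z : ℂ} (h : ‖a‖ * ‖z‖ < 1) :
    1 - conj a * z ≠ 0 := by
  intro h0
  have h1 : conj a * z = 1 := by linear_combination -h0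
  have h2 : ‖conj a * z‖ = 1 := by rw [h1]; simp
  rw [norm_mul, Complex.norm_conj] at h2
  rw [h2] at h
  exact lt_irrefl 1 h

set_option maxHeartbeats 1000000 in
lemma moeb_abs_le {a z : ℂ} {r s : ℝ} (ha : ‖a‖ ≤ r) (hz : ‖z‖ ≤ s)
    (hr : r < 1) (hs : s < 1) :
    ‖(a - z) / (1 - conj a * z)‖ ≤ (r + s) / (1 + r * s) := by
  have ha0 : 0 ≤ r := (norm_nonneg a).trans ha
  have hz0 : 0 ≤ s := (norm_nonneg z).trans hz
  have hrs : r * s < 1 := by nlinarith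
  have hD : 1 - conj a * z ≠ 0 := by
    refine denom_ne ?_
    have h1 : ‖a‖ * ‖z‖ ≤ r * s :=
      mul_le_mul ha hz (norm_nonneg z) ha0
    linarith
  have hDpos : 0 < ‖1 - conj a * z‖ := norm_pos_iff.mpr hD
  rw [norm_div, div_le_div_iff₀ hDpos (by nlinarith)]
  have hA : ‖a - z‖ ^ 2 = Complex.normSq (a - z) := Complex.sq_norm _
  have hB : ‖1 - conj a * z‖ ^ 2 = Complex.normSq (1 - conj a * z) := Complex.sq_norm _
  have h1 : ‖a - z‖ ≤ r + s := by
    have h2 := norm_sub_le a z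
    linarith
  have hsq : ‖a‖ ^ 2 ≤ r ^ 2 := by nlinarith [norm_nonneg a]
  have hsq' : ‖z‖ ^ 2 ≤ s ^ 2 := by nlinarith [norm_nonneg z]
  have p1 : (0:ℝ) ≤ 1 - r^2 := by nlinarith
  have p4 : 0 ≤ 1 - Complex.normSq z := by rw [← Complex.sq_norm]; nlinarith
  have hdiff : Complex.normSq (1 - conj a * z) - Complex.normSq (a - z)
      ≥ (1 - r^2) * (1 - s^2) := by
    rw [key_ident a z]
    calc (1 - r^2) * (1 - s^2) ≤ (1 - r^2) * (1 - Complex.normSq z) := by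
          rw [← Complex.sq_norm]; nlinarith
      _ ≤ (1 - Complex.normSq a) * (1 - Complex.normSq z) := by
          rw [← Complex.sq_norm a]; nlinarith
  have h1' : Complex.normSq (a - z) ≤ (r + s)^2 := by
    rw [← hA]; nlinarith [norm_nonneg (a - z)]
  have p2 : (0:ℝ) ≤ 1 - s^2 := by nlinarith
  have hq : (0:ℝ) ≤ (1 - r^2) * (1 - s^2) := mul_nonneg p1 p2
  have key : Complex.normSq (a - z) * (1 + r*s)^2
      ≤ (r + s)^2 * Complex.normSq (1 - conj a * z) := by
    nlinarith [mul_le_mul_of_nonneg_right h1' hq,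
      mul_nonneg (sq_nonneg (r + s)) (by linarith :
        (0:ℝ) ≤ Complex.normSq (1 - conj a * z) - Complex.normSq (a - z) - (1 - r^2) * (1 - s^2))]
  have hfin : (‖a - z‖ * (1 + r*s))^2 ≤ ((r + s) * ‖1 - conj a * z‖)^2 := by
    rw [mul_pow, mul_pow, hA, hB]; nlinarith
  have hx : 0 ≤ ‖a - z‖ * (1 + r*s) :=
    mul_nonneg (norm_nonneg _) (by nlinarith)
  have hy : 0 ≤ (r + s) * ‖1 - conj a * z‖ :=
    mul_nonneg (by linarith) hDpos.le
  exact (pow_le_pow_iff_left₀ hx hy two_ne_zero).mp hfin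

lemma ratio_lt_one {r s : ℝ} (hr0 : 0 ≤ r) (hs0 : 0 ≤ s) (hr : r < 1) (hs : s < 1) :
    (r + s) / (1 + r * s) < 1 := by
  rw [div_lt_one (by nlinarith)]
  nlinarith

lemma moeb_abs_lt_one {a z : ℂ} {r s : ℝ} (ha : ‖a‖ ≤ r) (hz : ‖z‖ ≤ s)
    (hr : r < 1) (hs : s < 1) :
    ‖(a - z) / (1 - conj a * z)‖ < 1 :=
  (moeb_abs_le ha hz hr hs).trans_lt (ratio_lt_one ((norm_nonneg a).trans ha)
    ((norm_nonneg z).trans hz) hr hs)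

lemma moeb_invol {a z : ℂ} (ha : ‖a‖ < 1) (hz : ‖z‖ < 1) :
    (a - (a - z) / (1 - conj a * z)) / (1 - conj a * ((a - z) / (1 - conj a * z))) = z := by
  have hD : 1 - conj a * z ≠ 0 := by
    refine denom_ne ?_
    have h1 : ‖a‖ * ‖z‖ ≤ ‖a‖ * 1 :=
      mul_le_mul_of_nonneg_left hz.le (norm_nonneg a)
    nlinarith [norm_nonneg a]
  have hna : Complex.normSq a < 1 := by
    rw [← Complex.sq_norm]; nlinarith [norm_nonneg a]
  have hAA : 1 - conj a * a ≠ 0 := by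
    intro h
    have h1 : (Complex.normSq a : ℂ) = 1 := by
      rw [Complex.normSq_eq_conj_mul_self]; linear_combination -h
    have h2 : Complex.normSq a = (1:ℝ) := by exact_mod_cast h1
    linarith
  have hD2 : 1 - conj a * ((a - z) / (1 - conj a * z)) ≠ 0 := by
    rw [sub_ne_zero]
    intro h
    have h1 := congrArg (fun t : ℂ => t * (1 - conj a * z)) h
    rw [mul_assoc, div_mul_cancel₀ _ hD] at h1
    exact hAA (by linear_combination h1)
  rw [div_eq_iff hD2, eq_comm]
  have hD' : 1 - z * conj a ≠ 0 := by rwa [mul_comm]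
  field_simp [hD, hD']
  ring

/-- coordinatewise Möbius map on c₀. -/
def moebC0 (u v : C₀(ℕ, ℂ)) : C₀(ℕ, ℂ) :=
  ⟨⟨fun n => (u n - v n) / (1 - conj (u n) * v n), continuous_of_discreteTopology⟩, by
    have hu : Tendsto (fun n => u n) (cocompact ℕ) (𝓝 0) := zero_at_infty u
    have hv : Tendsto (fun n => v n) (cocompact ℕ) (𝓝 0) := zero_at_infty v
    have hnum : Tendsto (fun n => u n - v n) (cocompact ℕ) (𝓝 0) := by
      simpa using hu.sub hv
    have hden : Tendsto (fun n => 1 - conj (u n) * v n) (cocompact ℕ) (𝓝 1) := by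
      have : Tendsto (fun n => conj (u n) * v n) (cocompact ℕ) (𝓝 0) := by
        simpa using ((Complex.continuous_conj.tendsto 0).comp hu).mul hv
      simpa using (tendsto_const_nhds (x := (1:ℂ))).sub this
    have := hnum.div hden one_ne_zero
    rw [zero_div] at this
    exact this⟩

@[simp] lemma moebC0_apply (u v : C₀(ℕ, ℂ)) (n : ℕ) :
    moebC0 u v n = (u n - v n) / (1 - conj (u n) * v n) := rfl

/-- `toBCF` as a linear isometry. -/
def iotaL : C₀(ℕ, ℂ) →ₗᵢ[ℂ] (ℕ →ᵇ ℂ) :=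
  ⟨{ toFun := ZeroAtInftyContinuousMap.toBCF
     map_add' := fun a b => by ext n; rfl
     map_smul' := fun c a => by ext n; rfl },
   fun f => ZeroAtInftyContinuousMap.norm_toBCF_eq_norm⟩

@[simp] lemma iotaL_apply (f : C₀(ℕ, ℂ)) (n : ℕ) : iotaL f n = f n := rfl

lemma isClosed_range_iotaL : IsClosed (Set.range iotaL) := by
  have : Set.range iotaL = Set.range (ZeroAtInftyContinuousMap.toBCF : C₀(ℕ, ℂ) → _) := rfl
  rw [this]
  exact ZeroAtInftyContinuousMap.isClosed_range_toBCF

/-- transfer differentiability through `toBCF`. -/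
lemma diff_transfer {g : ℂ → C₀(ℕ, ℂ)} {z : ℂ}
    (h : DifferentiableAt ℂ (fun w => iotaL (g w)) z) : DifferentiableAt ℂ g z := by
  obtain ⟨d, hd⟩ : ∃ d, HasDerivAt (fun w => iotaL (g w)) d z := ⟨_, h.hasDerivAt⟩
  have hmem : d ∈ Set.range iotaL := by
    refine isClosed_range_iotaL.mem_of_tendsto (hasDerivAt_iff_tendsto_slope.mp hd) ?_
    filter_upwards with w
    refine ⟨(w - z)⁻¹ • (g w - g z), ?_⟩
    rw [slope_def_module, map_smul, map_sub]
  obtain ⟨d', hd'⟩ := hmem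
  have : HasDerivAt g d' z := by
    rw [hasDerivAt_iff_tendsto]
    have heq : ∀ w : ℂ, ‖g w - g z - (w - z) • d'‖ = ‖iotaL (g w) - iotaL (g z) - (w - z) • d‖ := by
      intro w
      rw [← hd', ← map_smul, ← map_sub, ← map_sub, iotaL.norm_map]
    have := hasDerivAt_iff_tendsto.mp hd
    simpa only [heq] using this
  exact this.differentiableAt

lemma bcf_inverse_apply (t : ℕ →ᵇ ℂ) (h : ‖t‖ < 1) (n : ℕ) :
    (Ring.inverse ((1 : ℕ →ᵇ ℂ) - t)) n = (1 - t n)⁻¹ := by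
  rw [NormedRing.inverse_one_sub t h]
  have hw := (Units.oneSub t h).mul_inv
  have h1 := congrArg (fun f : ℕ →ᵇ ℂ => f n) hw
  simp only [BoundedContinuousFunction.mul_apply] at h1
  have hval : ((Units.oneSub t h : (ℕ →ᵇ ℂ)ˣ) : ℕ →ᵇ ℂ) n = 1 - t n := by
    rw [Units.val_oneSub]; rfl
  rw [hval] at h1
  have h2 : ((1 : ℕ →ᵇ ℂ) : ℕ → ℂ) n = 1 := rfl
  rw [show ((1 : ℕ →ᵇ ℂ)) n = (1:ℂ) from rfl] at h1
  exact eq_inv_of_mul_eq_one_right h1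

lemma c0_abs_le (x : C₀(ℕ, ℂ)) (n : ℕ) : ‖x n‖ ≤ ‖x‖ := by
  rw [← ZeroAtInftyContinuousMap.norm_toBCF_eq_norm]
  exact x.toBCF.norm_coe_le_norm n

lemma c0_norm_le {x : C₀(ℕ, ℂ)} {C : ℝ} (hC : 0 ≤ C) (h : ∀ n, ‖x n‖ ≤ C) :
    ‖x‖ ≤ C := by
  rw [← ZeroAtInftyContinuousMap.norm_toBCF_eq_norm]
  exact (BoundedContinuousFunction.norm_le hC).mpr
    (fun n => by simpa using h n)

lemma moebC0_norm_le {u x : C₀(ℕ, ℂ)} {s : ℝ} (hu : ‖u‖ < 1) (hx : ‖x‖ ≤ s) (hs : s < 1) :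
    ‖moebC0 u x‖ ≤ (‖u‖ + s) / (1 + ‖u‖ * s) := by
  have hs0 : 0 ≤ s := (norm_nonneg x).trans hx
  have hu0 : 0 ≤ ‖u‖ := norm_nonneg u
  refine c0_norm_le (div_nonneg (by linarith) (by nlinarith)) (fun n => ?_)
  rw [moebC0_apply]
  exact moeb_abs_le (c0_abs_le u n) ((c0_abs_le x n).trans hx) hu hs

lemma moebC0_norm_lt_one {u x : C₀(ℕ, ℂ)} {s : ℝ} (hu : ‖u‖ < 1) (hx : ‖x‖ ≤ s) (hs : s < 1) :
    ‖moebC0 u x‖ < 1 :=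
  (moebC0_norm_le hu hx hs).trans_lt
    (ratio_lt_one (norm_nonneg u) ((norm_nonneg x).trans hx) hu hs)

lemma moebC0_invol {u v : C₀(ℕ, ℂ)} (hu : ‖u‖ < 1) (hv : ‖v‖ < 1) :
    moebC0 u (moebC0 u v) = v := by
  ext n
  simp only [moebC0_apply]
  exact moeb_invol ((c0_abs_le u n).trans_lt hu) ((c0_abs_le v n).trans_lt hv)

lemma g_diff {u e : C₀(ℕ, ℂ)} (hu : ‖u‖ < 1) (he : ‖e‖ ≤ 1) {z : ℂ}
    (hz : ‖z‖ < 1) :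
    DifferentiableAt ℂ (fun w : ℂ => moebC0 u (w • e)) z := by
  apply diff_transfer
  have hb : ∀ w : ℂ, ‖w‖ < 1 → ‖star (iotaL u) * (w • iotaL e)‖ < 1 := by
    intro w hw
    have h1 : ‖star (iotaL u) * (w • iotaL e)‖ ≤ ‖star (iotaL u)‖ * ‖w • iotaL e‖ :=
      norm_mul_le _ _
    have h2 : ‖star (iotaL u)‖ = ‖u‖ := by rw [norm_star, iotaL.norm_map]
    have h3 : ‖w • iotaL e‖ = ‖w‖ * ‖e‖ := by
      rw [norm_smul, iotaL.norm_map]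
    rw [h2, h3] at h1
    have h4 : ‖w‖ * ‖e‖ ≤ ‖w‖ := by
      nlinarith [norm_nonneg w]
    have h5 : ‖u‖ * (‖w‖ * ‖e‖) ≤ 1 * ‖w‖ :=
      mul_le_mul hu.le h4 (by positivity) one_pos.le
    linarith
  have heq : (fun w : ℂ => iotaL (moebC0 u (w • e))) =ᶠ[𝓝 z]
      (fun w => (iotaL u - w • iotaL e) *
        Ring.inverse ((1 : ℕ →ᵇ ℂ) - star (iotaL u) * (w • iotaL e))) := by
    filter_upwards [isOpen_ball.mem_nhds
      (mem_ball_zero_iff.mpr (by simpa using hz))] with w hw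
    have hw1 : ‖w‖ < 1 := by
      simpa using mem_ball_zero_iff.mp hw
    ext n
    have hix := bcf_inverse_apply (star (iotaL u) * (w • iotaL e)) (hb w hw1) n
    simp only [BoundedContinuousFunction.mul_apply, BoundedContinuousFunction.coe_sub,
      Pi.sub_apply, BoundedContinuousFunction.coe_smul, Pi.smul_apply, smul_eq_mul,
      iotaL_apply, moebC0_apply, hix, BoundedContinuousFunction.star_apply,
      ZeroAtInftyContinuousMap.coe_smul, Complex.star_def, div_eq_mul_inv]
  rw [heq.differentiableAt_iff]
  have d1 : DifferentiableAt ℂ (fun w : ℂ => iotaL u - w • iotaL e) z :=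
    (differentiableAt_const _).sub (differentiableAt_id.smul_const _)
  have d2 : DifferentiableAt ℂ
      (fun w : ℂ => (1 : ℕ →ᵇ ℂ) - star (iotaL u) * (w • iotaL e)) z :=
    (differentiableAt_const _).sub ((differentiableAt_id.smul_const (iotaL e)).const_mul _)
  have d3 : DifferentiableAt ℂ Ring.inverse ((1 : ℕ →ᵇ ℂ) - star (iotaL u) * (z • iotaL e)) :=
    differentiableAt_inverse ⟨Units.oneSub _ (hb z hz), Units.val_oneSub _ _⟩
  exact d1.mul (DifferentiableAt.comp (g := Ring.inverse) z d3 d2)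

lemma ev_diff (n : ℕ) : Differentiable ℂ (fun x : C₀(ℕ, ℂ) => x n) := by
  have h : (fun x : C₀(ℕ, ℂ) => x n)
      = ((BoundedContinuousFunction.evalCLM ℂ n).comp iotaL.toContinuousLinearMap : _) := rfl
  rw [h]
  exact ContinuousLinearMap.differentiable _

/-- for `u, v` in the open unit ball of `c₀`, the pseudohyperbolic distance
between the evaluations at `u` and `v` on `H^∞(B_{c₀})` equals
`sup_n |(u_n − v_n)/(1 − conj(u_n) v_n)|`. -/
theorem stmt13 (u v : C₀(ℕ, ℂ)) (hu : u ∈ ball (0 : C₀(ℕ, ℂ)) 1)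
    (hv : v ∈ ball (0 : C₀(ℕ, ℂ)) 1) :
    IsLUB {t : ℝ | ∃ f : C₀(ℕ, ℂ) → ℂ, DifferentiableOn ℂ f (ball 0 1) ∧
        (∀ x ∈ ball (0 : C₀(ℕ, ℂ)) 1, ‖f x‖ ≤ 1) ∧ f u = 0 ∧ t = ‖f v‖}
      (⨆ n : ℕ, ‖(u n - v n) / (1 - conj (u n) * v n)‖) := by
  have hu1 : ‖u‖ < 1 := mem_ball_zero_iff.mp hu
  have hv1 : ‖v‖ < 1 := mem_ball_zero_iff.mp hv
  set w : C₀(ℕ, ℂ) := moebC0 u v with hw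
  have hwlt : ‖w‖ < 1 := moebC0_norm_lt_one hu1 le_rfl hv1
  have hsup : (⨆ n : ℕ, ‖(u n - v n) / (1 - conj (u n) * v n)‖) = ‖w‖ := by
    rw [← ZeroAtInftyContinuousMap.norm_toBCF_eq_norm,
      BoundedContinuousFunction.norm_eq_iSup_norm]
    rfl
  rw [hsup]
  constructor
  · rintro t ⟨f, hdf, hbf, hfu, rfl⟩
    set e : C₀(ℕ, ℂ) := ((‖w‖ : ℝ) : ℂ)⁻¹ • w with he_def
    have he : ‖e‖ ≤ 1 := by
      rw [he_def, norm_smul ((↑‖w‖ : ℂ))⁻¹ w, norm_inv, Complex.norm_real, Real.norm_eq_abs,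
        abs_of_nonneg (norm_nonneg w)]
      by_cases h0 : ‖w‖ = 0
      · simp [h0]
      · rw [inv_mul_cancel₀ h0]
    set g : ℂ → C₀(ℕ, ℂ) := fun z => moebC0 u (z • e) with hg_def
    have hglt : ∀ z : ℂ, ‖z‖ < 1 → ‖g z‖ < 1 := by
      intro z hz
      refine moebC0_norm_lt_one hu1 ?_ hz
      rw [norm_smul z e]
      nlinarith [norm_nonneg z, norm_nonneg e]
    have hg0 : g 0 = u := by
      ext n
      simp [hg_def]
    have hsmul : ((‖w‖ : ℝ) : ℂ) • e = w := by
      by_cases h0 : w = 0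
      · simp [he_def, h0]
      · rw [he_def, smul_smul, mul_inv_cancel₀ (by
          exact_mod_cast norm_ne_zero_iff.mpr h0), one_smul]
    have hgw : g ((‖w‖ : ℝ) : ℂ) = v := by
      rw [hg_def]
      simp only
      rw [hsmul, hw]
      exact moebC0_invol hu1 hv1
    set h : ℂ → ℂ := fun z => f (g z) with hh_def
    have hdh : DifferentiableOn ℂ h (ball 0 1) := by
      intro z hz
      have hz1 : ‖z‖ < 1 := by
        simpa using mem_ball_zero_iff.mp hz
      have hgd := g_diff hu1 he hz1
      have hfd : DifferentiableAt ℂ f (g z) :=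
        hdf.differentiableAt (isOpen_ball.mem_nhds (mem_ball_zero_iff.mpr (hglt z hz1)))
      exact (hfd.comp z hgd).differentiableWithinAt
    have hh0 : h 0 = 0 := by
      rw [hh_def]; simp only; rw [hg0, hfu]
    have hfv : ‖f v‖ = ‖h ((‖w‖ : ℝ) : ℂ)‖ := by
      rw [hh_def]; simp only; rw [hgw]
    have key : ∀ ε : ℝ, 0 < ε → ‖f v‖ ≤ (1 + ε) * ‖w‖ := by
      intro ε hε
      have hmaps : Set.MapsTo h (ball 0 1) (ball (h 0) (1 + ε)) := by
        intro z hz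
        have hz1 : ‖z‖ < 1 := by
          simpa using mem_ball_zero_iff.mp hz
        rw [mem_ball, dist_eq_norm, hh0, sub_zero]
        have hb1 : ‖h z‖ ≤ 1 := hbf _ (mem_ball_zero_iff.mpr (hglt z hz1))
        linarith
      have hzmem : ((‖w‖ : ℝ) : ℂ) ∈ ball (0 : ℂ) 1 := by
        rw [mem_ball_zero_iff, Complex.norm_real, Real.norm_eq_abs,
          abs_of_nonneg (norm_nonneg w)]
        exact hwlt
      have hS := Complex.dist_le_div_mul_dist_of_mapsTo_ball hdh (hmaps.mono_right ball_subset_closedBall) hzmem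
      rw [dist_eq_norm, dist_eq_norm, sub_zero, hh0, sub_zero] at hS
      rw [hfv]
      calc ‖h ((‖w‖ : ℝ) : ℂ)‖ ≤ (1 + ε) / 1 * ‖((‖w‖ : ℝ) : ℂ)‖ := hS
        _ = (1 + ε) * ‖w‖ := by
            rw [div_one, Complex.norm_real, Real.norm_eq_abs,
              abs_of_nonneg (norm_nonneg w)]
    by_contra hcon
    push_neg at hcon
    rcases (norm_nonneg w).eq_or_lt with h0 | h0
    · have h1 := key 1 one_pos
      rw [← h0] at h1
      simp only [mul_zero] at h1
      have := norm_nonneg (f v)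
      rw [← h0] at hcon
      linarith
    · set ε := (‖f v‖ - ‖w‖) / (2 * ‖w‖) with hε_def
      have hεpos : 0 < ε := by
        apply div_pos (by linarith) (by linarith)
      have h1 := key ε hεpos
      have h2 : ε * ‖w‖ = (‖f v‖ - ‖w‖) / 2 := by
        rw [hε_def, div_mul_eq_mul_div, mul_comm (2:ℝ) ‖w‖, ← div_div,
          mul_div_cancel_right₀ _ (ne_of_gt h0)]
      have h3 : (1 + ε) * ‖w‖ = ‖w‖ + ε * ‖w‖ := by ring
      linarith
  · intro b hb
    have hbn : ∀ n, ‖w n‖ ≤ b := by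
      intro n
      apply hb
      refine ⟨fun x => (u n - x n) / (1 - conj (u n) * x n), ?_, ?_, ?_, rfl⟩
      · intro x hx
        have hx1 : ‖x‖ < 1 := mem_ball_zero_iff.mp hx
        have hden : 1 - conj (u n) * x n ≠ 0 := by
          refine denom_ne ?_
          have h1 : ‖u n‖ * ‖x n‖ ≤ ‖u‖ * ‖x‖ :=
            mul_le_mul (c0_abs_le u n) (c0_abs_le x n) (norm_nonneg _) (norm_nonneg u)
          nlinarith [norm_nonneg u, norm_nonneg x]
        have hnum : DifferentiableAt ℂ (fun x : C₀(ℕ, ℂ) => u n - x n) x :=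
          (differentiableAt_const _).sub ((ev_diff n) x)
        have hdenom : DifferentiableAt ℂ (fun x : C₀(ℕ, ℂ) => 1 - conj (u n) * x n) x :=
          (differentiableAt_const _).sub (((ev_diff n) x).const_mul _)
        have hinv : DifferentiableAt ℂ (fun x : C₀(ℕ, ℂ) => (1 - conj (u n) * x n)⁻¹) x :=
          (differentiableAt_inv hden).comp x hdenom
        have hfin : DifferentiableAt ℂ
            (fun x : C₀(ℕ, ℂ) => (u n - x n) * (1 - conj (u n) * x n)⁻¹) x := hnum.mul hinv
        simpa only [div_eq_mul_inv] using hfin.differentiableWithinAt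
      · intro x hx
        have hx1 : ‖x‖ < 1 := mem_ball_zero_iff.mp hx
        have := moeb_abs_lt_one (c0_abs_le u n) (c0_abs_le x n) hu1 hx1
        linarith
      · simp
    have hb0 : 0 ≤ b := (norm_nonneg (w 0)).trans (hbn 0)
    exact c0_norm_le hb0 (fun n => by exact hbn n)
end
end
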